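/- For every unit vector C ∈ ℝⁿ, the gradient of G_C at (I,J) = (0,0) equals (1, −C) ∈ ℝ × ℝⁿ, and the Hessian matrix of G_C at (0,0) (in the variables (I,J)) equals the (n+1)×(n+1) block matrix [[−11/12, Cᵀ],[C, Idₙ − 2CCᵀ]]. Consequently the Hessian has determinant −1/12, and the (n+2)×(n+2) bordered matrix formed from this Hessian and the gradient (1,−C) has determinant −1/12; in particular both are invertible. -/

import Mathlib

/-!
STATEMENT 8: for every unit vector `C ∈ ℝⁿ`, the gradient of `G_C` at `(I,J) = (0,0)`
is `(1,−C)` and the Hessian matrix of `G_C` at `(0,0)` in the variables `(I,J)` is the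
block matrix `[[−11/12, Cᵀ],[C, Idₙ − 2CCᵀ]]`; consequently the Hessian has determinant
`−1/12` and the bordered matrix built from the Hessian and the gradient has determinant
`−1/12`; in particular both are invertible.
The index type `Fin 1 ⊕ Fin n` encodes the `1 + n` block structure (the `I`-direction
followed by the `J`-directions).
-/

noncomputable section

/-- The normal form `G_C(I,J)` of the thermostated free particle, as a function on
`ℝ × ℝⁿ`. -/
def Gc {n : ℕ} (C : Fin n → ℝ) (p : ℝ × (Fin n → ℝ)) : ℝ :=
  p.1 * (1 - (11 / 24) * p.1 + (∑ i, C i * p.2 i) + (3 / 2) * (∑ i, C i * p.2 i) ^ 2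
        - (∑ i, p.2 i ^ 2) / 2)
    - (∑ i, C i * p.2 i) - (∑ i, C i * p.2 i) ^ 2 + (∑ i, p.2 i ^ 2) / 2
    + ((∑ i, p.2 i ^ 2) - (4 / 3) * (∑ i, C i * p.2 i) ^ 2) * (∑ i, C i * p.2 i)
    - (∑ i, p.2 i ^ 2) ^ 2 / 4 + 2 * (∑ i, C i * p.2 i) ^ 2 * (∑ i, p.2 i ^ 2)
    - 2 * (∑ i, C i * p.2 i) ^ 4

/-- The standard basis of `ℝ × ℝⁿ`, indexed by `Fin 1 ⊕ Fin n`. -/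
def basisIJ (n : ℕ) : Fin 1 ⊕ Fin n → ℝ × (Fin n → ℝ) :=
  Sum.elim (fun _ => ((1 : ℝ), 0)) (fun i => ((0 : ℝ), Pi.single i 1))

/-- The Hessian matrix of a function `G : ℝ × ℝⁿ → ℝ` at a point `p`, in the
variables `(I,J)`: the matrix of the second Fréchet derivative in the standard basis. -/
def hessianIJ {n : ℕ} (G : ℝ × (Fin n → ℝ) → ℝ) (p : ℝ × (Fin n → ℝ)) :
    Matrix (Fin 1 ⊕ Fin n) (Fin 1 ⊕ Fin n) ℝ :=
  Matrix.of fun i j => fderiv ℝ (fderiv ℝ G) p (basisIJ n i) (basisIJ n j)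

/-- The gradient vector of `G` at `p`, in the standard basis of `ℝ × ℝⁿ`. -/
def gradIJ {n : ℕ} (G : ℝ × (Fin n → ℝ) → ℝ) (p : ℝ × (Fin n → ℝ)) :
    Fin 1 ⊕ Fin n → ℝ :=
  fun i => fderiv ℝ G p (basisIJ n i)

/-- The block matrix `A = [[−11/12, Cᵀ],[C, Idₙ − 2CCᵀ]]`. -/
def hessMat (n : ℕ) (C : Fin n → ℝ) : Matrix (Fin 1 ⊕ Fin n) (Fin 1 ⊕ Fin n) ℝ :=
  Matrix.fromBlocks
    (Matrix.of fun _ _ => (-11 / 12 : ℝ))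
    (Matrix.of fun _ j => C j)
    (Matrix.of fun i _ => C i)
    (1 - (2 : ℝ) • Matrix.vecMulVec C C)

/-- The bordered matrix `[[A, ω],[ωᵀ, 0]]` of a square matrix `A` and a vector `ω`. -/
def bordered {m : Type*} [Fintype m] [DecidableEq m]
    (A : Matrix m m ℝ) (ω : m → ℝ) : Matrix (m ⊕ Fin 1) (m ⊕ Fin 1) ℝ :=
  Matrix.fromBlocks A (Matrix.of fun i _ => ω i) (Matrix.of fun _ j => ω j) 0

namespace GcAux


variable {n : ℕ} (C : Fin n → ℝ)

/-- coordinate projections of `ℝ × ℝⁿ` -/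
def piL (n : ℕ) (i : Fin n) : (ℝ × (Fin n → ℝ)) →L[ℝ] ℝ :=
  (ContinuousLinearMap.proj i).comp (ContinuousLinearMap.snd ℝ ℝ (Fin n → ℝ))

def fstL (n : ℕ) : (ℝ × (Fin n → ℝ)) →L[ℝ] ℝ := ContinuousLinearMap.fst ℝ ℝ (Fin n → ℝ)

def aL : (ℝ × (Fin n → ℝ)) →L[ℝ] ℝ := ∑ i, C i • piL n i

@[simp] lemma piL_apply (i : Fin n) (x : ℝ × (Fin n → ℝ)) : piL n i x = x.2 i := rfl
@[simp] lemma fstL_apply (x : ℝ × (Fin n → ℝ)) : fstL n x = x.1 := rfl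
@[simp] lemma aL_apply (x : ℝ × (Fin n → ℝ)) : aL C x = ∑ i, C i * x.2 i := by
  simp [aL]

def gI (x : ℝ × (Fin n → ℝ)) : ℝ :=
  1 - 11/12 * x.1 + (∑ i, C i * x.2 i) + 3/2 * (∑ i, C i * x.2 i)^2 - (∑ i, x.2 i ^ 2)/2

def gs (x : ℝ × (Fin n → ℝ)) : ℝ :=
  x.1 * (1 + 3 * (∑ i, C i * x.2 i)) - 1 - 2 * (∑ i, C i * x.2 i) + (∑ i, x.2 i ^ 2)
    - 4 * (∑ i, C i * x.2 i)^2 + 4 * (∑ i, C i * x.2 i) * (∑ i, x.2 i ^ 2)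
    - 8 * (∑ i, C i * x.2 i)^3

def gq (x : ℝ × (Fin n → ℝ)) : ℝ :=
  -x.1/2 + 1/2 + (∑ i, C i * x.2 i) - (∑ i, x.2 i ^ 2)/2 + 2 * (∑ i, C i * x.2 i)^2

/-- explicit first derivative of `Gc` -/
def DG (x : ℝ × (Fin n → ℝ)) : (ℝ × (Fin n → ℝ)) →L[ℝ] ℝ :=
  gI C x • fstL n + gs C x • aL C + gq C x • ∑ i, (2 * x.2 i) • piL n i

lemma hasFDerivAt_a (x : ℝ × (Fin n → ℝ)) :
    HasFDerivAt (fun p : ℝ × (Fin n → ℝ) => ∑ i, C i * p.2 i) (aL C) x := by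
  have h := (aL C).hasFDerivAt (x := x)
  convert h using 1
  funext p; simp

lemma myDivConst {E : Type*} [NormedAddCommGroup E] [NormedSpace ℝ E]
    {f : E → ℝ} {f' : E →L[ℝ] ℝ} {x : E} (h : HasFDerivAt f f' x) (c : ℝ) :
    HasFDerivAt (fun y => f y / c) (c⁻¹ • f') x := by
  simpa [div_eq_mul_inv] using h.mul_const c⁻¹

lemma myPow {E : Type*} [NormedAddCommGroup E] [NormedSpace ℝ E]
    {f : E → ℝ} {f' : E →L[ℝ] ℝ} {x : E} (h : HasFDerivAt f f' x) (k : ℕ) :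
    HasFDerivAt (fun y => f y ^ (k+1)) (((k+1 : ℝ) * f x ^ k) • f') x := by
  induction k with
  | zero => simpa using h
  | succ m ih =>
      have h2 := ih.mul h
      have hfun : (fun y => f y ^ (m+1+1)) = fun y => f y ^ (m+1) * f y := by
        funext y; ring
      have hder : (((m+1+1 : ℕ) : ℝ) * f x ^ (m+1)) • f' =
          f x ^ (m+1) • f' + f x • (((m : ℝ)+1) * f x ^ m) • f' := by
        ext v; simp; push_cast; ring
      rw [hfun]
      push_cast
      rw [show ((m:ℝ) + 1 + 1) = ((m+1+1 : ℕ) : ℝ) by push_cast; ring, hder]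
      exact h2

lemma myPow2 {E : Type*} [NormedAddCommGroup E] [NormedSpace ℝ E]
    {f : E → ℝ} {f' : E →L[ℝ] ℝ} {x : E} (h : HasFDerivAt f f' x) :
    HasFDerivAt (fun y => f y ^ 2) ((2 * f x) • f') x := by
  have h2 := myPow h 1
  norm_num at h2; exact h2

lemma myPow3 {E : Type*} [NormedAddCommGroup E] [NormedSpace ℝ E]
    {f : E → ℝ} {f' : E →L[ℝ] ℝ} {x : E} (h : HasFDerivAt f f' x) :
    HasFDerivAt (fun y => f y ^ 3) ((3 * f x ^ 2) • f') x := by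
  have h2 := myPow h 2
  norm_num at h2; exact h2

lemma myPow4 {E : Type*} [NormedAddCommGroup E] [NormedSpace ℝ E]
    {f : E → ℝ} {f' : E →L[ℝ] ℝ} {x : E} (h : HasFDerivAt f f' x) :
    HasFDerivAt (fun y => f y ^ 4) ((4 * f x ^ 3) • f') x := by
  have h2 := myPow h 3
  norm_num at h2; exact h2

lemma hasFDerivAt_b (x : ℝ × (Fin n → ℝ)) :
    HasFDerivAt (fun p : ℝ × (Fin n → ℝ) => ∑ i, p.2 i ^ 2)
      (∑ i, (2 * x.2 i) • piL n i) x := by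
  have : ∀ i : Fin n, HasFDerivAt (fun p : ℝ × (Fin n → ℝ) => p.2 i ^ 2)
      ((2 * x.2 i) • piL n i) x := by
    intro i
    have h := myPow2 ((piL n i).hasFDerivAt (x := x))
    simpa using h
  exact HasFDerivAt.fun_sum (fun i _ => this i)

lemma hasFDerivAt_Gc (x : ℝ × (Fin n → ℝ)) :
    HasFDerivAt (Gc C) (DG C x) x := by
  have hI : HasFDerivAt (fun p : ℝ × (Fin n → ℝ) => p.1) (fstL n) x := hasFDerivAt_fst
  have ha := hasFDerivAt_a C x
  have hb := hasFDerivAt_b (n := n) x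
  have H := ((((((hI.mul ((((((hasFDerivAt_const (1:ℝ) x).sub (hI.const_mul (11/24))).add
      ha).add ((myPow2 ha).const_mul (3/2))).sub (myDivConst hb 2)))).sub ha).sub
      (myPow2 ha)).add (myDivConst hb 2)).add ((hb.sub ((myPow2 ha).const_mul (4/3))).mul
      ha)).sub (myDivConst (myPow2 hb) 4)).add (((myPow2 ha).const_mul 2).mul hb) |>.sub
      ((myPow4 ha).const_mul 2)
  refine H.congr_fderiv ?_
  ext v <;>
    (simp [DG, gI, gs, gq] <;> ring)



variable {n : ℕ} (C : Fin n → ℝ)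

lemma fderiv_Gc : fderiv ℝ (Gc C) = DG C := funext fun x => (hasFDerivAt_Gc C x).fderiv

/-- the second derivative of `Gc` at the origin -/
def D2 : (ℝ × (Fin n → ℝ)) →L[ℝ] ((ℝ × (Fin n → ℝ)) →L[ℝ] ℝ) :=
  (((-11/12 : ℝ) • fstL n + aL C).smulRight (fstL n))
    + ((fstL n - (2:ℝ) • aL C).smulRight (aL C))
    + ∑ i, (piL n i).smulRight (piL n i)

def MM : (ℝ × (Fin n → ℝ)) →L[ℝ] ((ℝ × (Fin n → ℝ)) →L[ℝ] ℝ) :=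
  ∑ i, (2:ℝ) • ((piL n i).smulRight (piL n i))

lemma hasFDerivAt_DG : HasFDerivAt (DG C) (D2 C) (0 : ℝ × (Fin n → ℝ)) := by
  set x₀ : ℝ × (Fin n → ℝ) := (0 : ℝ × (Fin n → ℝ)) with hx₀
  have hI : HasFDerivAt (fun p : ℝ × (Fin n → ℝ) => p.1) (fstL n) x₀ := hasFDerivAt_fst
  have ha := hasFDerivAt_a C x₀
  have hb := hasFDerivAt_b (n := n) x₀
  have hM : HasFDerivAt (fun x : ℝ × (Fin n → ℝ) => ∑ i, (2 * x.2 i) • piL n i)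
      (MM (n := n)) x₀ := by
    have h := (MM (n := n)).hasFDerivAt (x := x₀)
    convert h using 1
    funext x
    simp [MM, smul_smul]
  have hgI : HasFDerivAt (gI C)
      ((0 : (ℝ × (Fin n → ℝ)) →L[ℝ] ℝ) - (11/12 : ℝ) • fstL n + aL C
        + (3/2 : ℝ) • (2 * ∑ i, C i * x₀.2 i) • aL C - (2:ℝ)⁻¹ • ∑ i, (2 * x₀.2 i) • piL n i) x₀ :=
    ((((hasFDerivAt_const (1:ℝ) x₀).sub (hI.const_mul (11/12))).add ha).add
      ((myPow2 ha).const_mul (3/2))).sub (myDivConst hb 2)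
  have hgs := ((((((hI.mul ((hasFDerivAt_const (1:ℝ) x₀).add (ha.const_mul 3))).sub
      (hasFDerivAt_const (1:ℝ) x₀)).sub (ha.const_mul 2)).add hb).sub
      ((myPow2 ha).const_mul 4)).add ((ha.const_mul 4).mul hb)).sub ((myPow3 ha).const_mul 8)
  have hgq := ((((myDivConst hI.neg 2).add (hasFDerivAt_const ((1:ℝ)/2) x₀)).add ha).sub
      (myDivConst hb 2)).add ((myPow2 ha).const_mul 2)
  have H := ((hgI.smul_const (fstL n)).add (hgs.smul_const (aL C))).add (hgq.smul hM)
  have hfun : DG C = fun x => gI C x • fstL n + gs C x • aL C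
      + gq C x • ∑ i, (2 * x.2 i) • piL n i := rfl
  rw [hfun]
  refine H.congr_fderiv ?_
  refine ContinuousLinearMap.ext fun (w : ℝ × (Fin n → ℝ)) => ContinuousLinearMap.ext fun (v : ℝ × (Fin n → ℝ)) => ?_
  have hs : (∑ x, 2 * w.2 x * v.2 x) = 2 * ∑ x, w.2 x * v.2 x := by
    rw [Finset.mul_sum]; exact Finset.sum_congr rfl fun i _ => by ring
  simp [D2, MM, gI, gs, gq, hx₀, smul_smul]
  rw [hs]
  ring

lemma fderiv2_Gc : fderiv ℝ (fderiv ℝ (Gc C)) (0 : ℝ × (Fin n → ℝ)) = D2 C := by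
  rw [fderiv_Gc]
  exact (hasFDerivAt_DG C).fderiv

lemma grad_eq : gradIJ (Gc C) (0, 0) = Sum.elim (fun _ => (1 : ℝ)) (fun i => -C i) := by
  funext i
  have h0 : fderiv ℝ (Gc C) (0 : ℝ × (Fin n → ℝ)) = DG C 0 := by rw [fderiv_Gc]
  cases i with
  | inl i => simp [gradIJ, ← Prod.zero_eq_mk, h0, DG, gI, gs, gq, basisIJ]
  | inr i => simp [gradIJ, ← Prod.zero_eq_mk, h0, DG, gI, gs, gq, basisIJ, Pi.single_apply, mul_ite,
      Finset.sum_ite_eq']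

lemma hess_eq : hessianIJ (Gc C) (0, 0) = hessMat n C := by
  funext i j
  have h2 := fderiv2_Gc C
  cases i with
  | inl i =>
      cases j with
      | inl j =>
          simp [hessianIJ, ← Prod.zero_eq_mk, h2, D2, basisIJ, hessMat]
      | inr j =>
          simp [hessianIJ, ← Prod.zero_eq_mk, h2, D2, basisIJ, hessMat, Pi.single_apply, mul_ite,
            Finset.sum_ite_eq']
  | inr i =>
      cases j with
      | inl j =>
          simp [hessianIJ, ← Prod.zero_eq_mk, h2, D2, basisIJ, hessMat, Pi.single_apply, mul_ite,
            Finset.sum_ite_eq']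
      | inr j =>
          simp [hessianIJ, ← Prod.zero_eq_mk, h2, D2, basisIJ, hessMat, Pi.single_apply, mul_ite,
            ite_mul, Finset.sum_ite_eq', Matrix.one_apply, Matrix.vecMulVec_apply]
          rcases eq_or_ne i j with hij | hij
          · simp [hij]; ring
          · simp [hij, Ne.symm hij]; ring



variable {n : ℕ} (C : Fin n → ℝ)

def Hinv : Matrix (Fin 1 ⊕ Fin n) (Fin 1 ⊕ Fin n) ℝ :=
  Matrix.fromBlocks
    (Matrix.of fun _ _ => (12 : ℝ))
    (Matrix.of fun _ j => 12 * C j)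
    (Matrix.of fun i _ => 12 * C i)
    (1 + (10 : ℝ) • Matrix.vecMulVec C C)

lemma Hinv_mul (hC : ∑ i, C i ^ 2 = 1) : Hinv C * hessMat n C = 1 := by
  have hC' : ∑ i, C i * C i = 1 := by simpa [sq] using hC
  ext i j
  rcases i with i | i <;> rcases j with j | j <;>
    simp [Hinv, hessMat, Matrix.mul_apply, Fintype.sum_sum_type, Matrix.one_apply,
      Matrix.vecMulVec_apply, Pi.single_apply, mul_add, mul_sub, add_mul, sub_mul,
      Finset.sum_add_distrib, Finset.sum_sub_distrib, mul_ite, ite_mul] <;>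
    ring_nf <;>
    simp [← Finset.sum_mul, ← Finset.mul_sum, hC', hC] <;>
    norm_num [Subsingleton.elim i j]




variable {n : ℕ} (C : Fin n → ℝ)

lemma mul_Hinv (hC : ∑ i, C i ^ 2 = 1) : hessMat n C * Hinv C = 1 := by
  have hC' : ∑ i, C i * C i = 1 := by simpa [sq] using hC
  ext i j
  rcases i with i | i <;> rcases j with j | j <;>
    simp [Hinv, hessMat, Matrix.mul_apply, Fintype.sum_sum_type, Matrix.one_apply,
      Matrix.vecMulVec_apply, Pi.single_apply, mul_add, mul_sub, add_mul, sub_mul,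
      Finset.sum_add_distrib, Finset.sum_sub_distrib, mul_ite, ite_mul] <;>
    ring_nf <;>
    simp [← Finset.sum_mul, ← Finset.mul_sum, hC', hC] <;>
    norm_num [Subsingleton.elim i j]

def hessInvertible (hC : ∑ i, C i ^ 2 = 1) : Invertible (hessMat n C) :=
  ⟨Hinv C, Hinv_mul C hC, mul_Hinv C hC⟩

lemma det_hessMat (hC : ∑ i, C i ^ 2 = 1) : (hessMat n C).det = -1/12 := by
  have hC' : ∑ i, C i * C i = 1 := by simpa [sq] using hC
  letI : Invertible (Matrix.of fun _ _ : Fin 1 => (-11/12 : ℝ)) :=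
    ⟨Matrix.of fun _ _ => (-12/11 : ℝ),
     by ext i j; fin_cases i; fin_cases j; simp [Matrix.mul_apply]; norm_num,
     by ext i j; fin_cases i; fin_cases j; simp [Matrix.mul_apply]; norm_num⟩
  rw [hessMat, Matrix.det_fromBlocks₁₁]
  have h1 : (Matrix.of fun _ _ : Fin 1 => (-11/12 : ℝ)).det = -11/12 := by
    simp [Matrix.det_fin_one]
  have hS : (1 - (2:ℝ) • Matrix.vecMulVec C C) -
      (Matrix.of fun i (_ : Fin 1) => C i) * ⅟(Matrix.of fun _ _ : Fin 1 => (-11/12 : ℝ))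
        * (Matrix.of fun (_ : Fin 1) j => C j) =
      1 + Matrix.replicateCol (Fin 1) C * Matrix.replicateRow (Fin 1) ((-10/11 : ℝ) • C) := by
    have hinv : ⅟(Matrix.of fun _ _ : Fin 1 => (-11/12 : ℝ)) =
        Matrix.of fun _ _ => (-12/11 : ℝ) := rfl
    rw [hinv]
    ext i j
    simp [Matrix.mul_apply, Matrix.vecMulVec_apply, Matrix.one_apply, Matrix.replicateCol,
      Matrix.replicateRow]
    rcases eq_or_ne i j with hij | hij <;> simp [hij] <;> ring
  rw [h1, hS]
  erw [Matrix.det_one_add_replicateCol_mul_replicateRow (ι := Fin 1) C ((-10/11 : ℝ) • C)]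
  have : dotProduct ((-10/11 : ℝ) • C) C = -10/11 := by
    simp [dotProduct, mul_assoc, ← Finset.mul_sum, hC']
  rw [this]
  norm_num

lemma det_bordered (hC : ∑ i, C i ^ 2 = 1) :
    (bordered (hessMat n C) (Sum.elim (fun _ => (1:ℝ)) (fun i => -C i))).det = -1/12 := by
  have hC' : ∑ i, C i * C i = 1 := by simpa [sq] using hC
  letI := hessInvertible C hC
  rw [bordered, Matrix.det_fromBlocks₁₁, det_hessMat C hC]
  have hinv : ⅟(hessMat n C) = Hinv C := rfl
  rw [hinv]
  have : ((0 : Matrix (Fin 1) (Fin 1) ℝ) -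
      (Matrix.of fun (_ : Fin 1) (j : Fin 1 ⊕ Fin n) => Sum.elim (fun _ => (1:ℝ)) (fun i => -C i) j) * Hinv C *
      (Matrix.of fun (i : Fin 1 ⊕ Fin n) (_ : Fin 1) => Sum.elim (fun _ => (1:ℝ)) (fun i => -C i) i)).det = 1 := by
    rw [Matrix.det_fin_one]
    simp [Hinv, Matrix.mul_apply, Fintype.sum_sum_type, Matrix.one_apply,
      Matrix.vecMulVec_apply, mul_add, mul_sub, add_mul, sub_mul,
      Finset.sum_add_distrib, Finset.sum_sub_distrib, mul_ite, ite_mul]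
    ring_nf
    simp [← Finset.sum_mul, ← Finset.mul_sum, hC', hC]
    ring_nf
    have h10 : (∑ i, C i ^ 2 * 10) = 10 := by
      have he : ∀ i, C i ^ 2 * 10 = 10 * (C i * C i) := fun i => by ring
      simp [he, ← Finset.mul_sum, hC']
    rw [h10]
    norm_num
  rw [this]
  norm_num

end GcAux

theorem Gc_gradient_hessian_nondegenerate
    (n : ℕ) (C : Fin n → ℝ) (hC : ∑ i, C i ^ 2 = 1) :
    gradIJ (Gc C) (0, 0) = Sum.elim (fun _ => (1 : ℝ)) (fun i => -C i) ∧
    hessianIJ (Gc C) (0, 0) = hessMat n C ∧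
    (hessianIJ (Gc C) (0, 0)).det = -1 / 12 ∧
    (bordered (hessianIJ (Gc C) (0, 0)) (gradIJ (Gc C) (0, 0))).det = -1 / 12 ∧
    IsUnit (hessianIJ (Gc C) (0, 0)) ∧
    IsUnit (bordered (hessianIJ (Gc C) (0, 0)) (gradIJ (Gc C) (0, 0))) := by
  have hgrad := GcAux.grad_eq C
  have hhess := GcAux.hess_eq C
  have hdet : (hessianIJ (Gc C) (0, 0)).det = -1 / 12 := by
    rw [hhess]; simpa using GcAux.det_hessMat C hC
  have hdetb : (bordered (hessianIJ (Gc C) (0, 0)) (gradIJ (Gc C) (0, 0))).det = -1 / 12 := by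
    rw [hhess, hgrad]; simpa using GcAux.det_bordered C hC
  refine ⟨hgrad, hhess, hdet, hdetb, ?_, ?_⟩
  · rw [Matrix.isUnit_iff_isUnit_det, hdet]
    exact isUnit_iff_ne_zero.2 (by norm_num)
  · rw [Matrix.isUnit_iff_isUnit_det, hdetb]
    exact isUnit_iff_ne_zero.2 (by norm_num)

end
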